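/- (The ℓ+1 pebble condition.) Let H be a reachable configuration of the (k,ℓ)-pebble game with colors, and let v, w be vertices such that adding an edge between v and w keeps the underlying graph (k,ℓ)-sparse. If the total number of pebbles on {v,w} is less than ℓ+1, then there is a sequence of pebble-slide moves after which some pebble that was not on {v,w} is on v or on w, and no pebble originally on {v,w} has been removed from {v,w}. -/

import Mathlib

open scoped Classical

namespace PebbleGame

/-- A configuration of the `(k,ℓ)`-pebble game with colors: a directed multigraph
whose edges are records `(tail, head, color)` (the color of an edge is the color of
the unique pebble lying on it), together with the multiset of colors of the pebbles
sitting on each vertex. -/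
structure PGConfig (V : Type) (k : ℕ) where
  edges : Multiset (V × V × Fin k)
  pebs : V → Multiset (Fin k)

variable {V : Type} [DecidableEq V] {k ℓ : ℕ}

/-- The configuration resulting from an add-edge move: a pebble of color `c` is picked
up from `v`, the directed edge `vw` is added and the pebble is placed on it. -/
def addEdgeCfg (H : PGConfig V k) (v w : V) (c : Fin k) : PGConfig V k :=
  ⟨(v, w, c) ::ₘ H.edges, Function.update H.pebs v ((H.pebs v).erase c)⟩

/-- The configuration resulting from a pebble-slide move along the edge `(v, w, c)`,
using a pebble of color `c'` on `w`: the edge `vw` is replaced by `wv`, the pebble of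
color `c` that was on the edge goes to `v`, and the pebble of color `c'` from `w` is
placed on the new edge `wv`. -/
def slideCfg (H : PGConfig V k) (v w : V) (c c' : Fin k) : PGConfig V k :=
  ⟨(w, v, c') ::ₘ H.edges.erase (v, w, c),
    Function.update (Function.update H.pebs w ((H.pebs w).erase c')) v
      (c ::ₘ Function.update H.pebs w ((H.pebs w).erase c') v)⟩

/-- A legal move of the `(k,ℓ)`-pebble game with colors. -/
inductive Step (k ℓ : ℕ) : PGConfig V k → PGConfig V k → Prop
  | add (H : PGConfig V k) (v w : V) (c : Fin k)
      (hpeb : ℓ + 1 ≤ ∑ u ∈ ({v, w} : Finset V), (H.pebs u).card)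
      (hc : c ∈ H.pebs v) :
      Step k ℓ H (addEdgeCfg H v w c)
  | slide (H : PGConfig V k) (v w : V) (c c' : Fin k)
      (he : (v, w, c) ∈ H.edges)
      (hc : c' ∈ H.pebs w) :
      Step k ℓ H (slideCfg H v w c c')

/-- The initial configuration: no edges, and one pebble of each of the `k` colors on
every vertex. -/
def initCfg (V : Type) [DecidableEq V] [Fintype V] (k : ℕ) : PGConfig V k :=
  ⟨0, fun _ => Finset.univ.val⟩

/-- A configuration is reachable if it arises from the initial configuration by a
finite sequence of legal moves. -/
def Reachable [Fintype V] (k ℓ : ℕ) (H : PGConfig V k) : Prop :=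
  Relation.ReflTransGen (Step k ℓ) (initCfg V k) H

/-- The underlying undirected multigraph (multiset of edges) of a configuration. -/
def undirected (H : PGConfig V k) : Multiset (Sym2 V) :=
  H.edges.map fun e => s(e.1, e.2.1)

/-- The (undirected) edges of a configuration carrying a pebble of color `c`. -/
def monoEdges (H : PGConfig V k) (c : Fin k) : Multiset (Sym2 V) :=
  (H.edges.filter fun e => e.2.2 = c).map fun e => s(e.1, e.2.1)

/-- The undirected edges of color `c` among a multiset `F` of directed colored
edges. -/
def monoOf (F : Multiset (V × V × Fin k)) (c : Fin k) : Multiset (Sym2 V) :=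
  (F.filter fun e => e.2.2 = c).map fun e => s(e.1, e.2.1)

/-- `G` (a multiset of undirected edges on the fixed finite vertex set `V`) is a
`(k,ℓ)`-pebble-game graph if it is the underlying undirected multigraph of some
reachable configuration. -/
def PebbleGameGraph [Fintype V] (k ℓ : ℕ) (E : Multiset (Sym2 V)) : Prop :=
  ∃ H : PGConfig V k, Reachable k ℓ H ∧ undirected H = E

/-- The edges of `E` spanned by the vertex set `S` (both endpoints in `S`). -/
def spanned (E : Multiset (Sym2 V)) (S : Finset V) : Multiset (Sym2 V) :=
  E.filter fun e => e ∈ S.sym2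

/-- A multigraph is `(k,ℓ)`-sparse if every nonempty set of `n'` vertices spans at
most `k n' - ℓ` edges. -/
def Sparse (k ℓ : ℕ) (E : Multiset (Sym2 V)) : Prop :=
  ∀ S : Finset V, S.Nonempty → (spanned E S).card ≤ k * S.card - ℓ

/-- A multigraph is `(k,ℓ)`-tight if it is `(k,ℓ)`-sparse with exactly `k|V| - ℓ`
edges. -/
def Tight [Fintype V] (k ℓ : ℕ) (E : Multiset (Sym2 V)) : Prop :=
  Sparse k ℓ E ∧ E.card = k * Fintype.card V - ℓ

/-- Connectivity (as undirected multigraphs) via the edges of `F`. -/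
def Conn (F : Multiset (Sym2 V)) : V → V → Prop :=
  Relation.ReflTransGen fun a b => s(a, b) ∈ F

/-- The connected components of the graph with vertex set `S` and edge multiset `F`
(whose edges are assumed to be spanned by `S`), as a finset of vertex sets. -/
noncomputable def components (S : Finset V) (F : Multiset (Sym2 V)) : Finset (Finset V) :=
  S.image fun v => S.filter fun u => Conn F v u

/-- The tree-pieces of the graph `(S, F)`: connected components that contain no cycle,
i.e. whose spanned edge count is exactly one less than their vertex count (an isolated
vertex is a tree-piece). -/
noncomputable def treePieces (S : Finset V) (F : Multiset (Sym2 V)) : Finset (Finset V) :=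
  (components S F).filter fun C => (spanned F C).card + 1 = C.card

/-- The number of tree-pieces of the graph `(S, F)`. -/
noncomputable def treePieceCount (S : Finset V) (F : Multiset (Sym2 V)) : ℕ :=
  (treePieces S F).card

/-- A multigraph contains a cycle iff some nonempty vertex set spans at least as many
edges as it has vertices. -/
def HasCycle (F : Multiset (Sym2 V)) : Prop :=
  ∃ S : Finset V, S.Nonempty ∧ S.card ≤ (spanned F S).card

/-- A spanning tree on the whole (finite) vertex set: connected with `|V| - 1` edges. -/
def IsSpanningTree [Fintype V] (T : Multiset (Sym2 V)) : Prop :=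
  (∀ u v : V, Conn T u v) ∧ T.card + 1 = Fintype.card V

/-- A spanning map-graph: the edges admit an orientation in which every vertex has
out-degree exactly one. -/
def IsSpanningMapGraph [Fintype V] (T : Multiset (Sym2 V)) : Prop :=
  ∃ M : Multiset (V × V), M.map (fun p => s(p.1, p.2)) = T ∧
    ∀ v : V, (M.filter fun p => p.1 = v).card = 1

/-- A `(k,ℓ)`-maps-and-trees decomposition: `ℓ` edge-disjoint spanning trees and
`k - ℓ` edge-disjoint spanning map-graphs whose union is `E`. -/
def MapsAndTrees [Fintype V] (k ℓ : ℕ) (E : Multiset (Sym2 V)) : Prop :=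
  ∃ (T : Fin ℓ → Multiset (Sym2 V)) (M : Fin (k - ℓ) → Multiset (Sym2 V)),
    ((∑ i, T i) + ∑ j, M j) = E ∧ (∀ i, IsSpanningTree (T i)) ∧
      ∀ j, IsSpanningMapGraph (M j)

/-- `(S, T)` is a (possibly single-vertex) tree: nonempty vertex set `S`, edges spanned
by `S`, connected on `S`, and `|T| + 1 = |S|`. -/
def IsTreeOn (S : Finset V) (T : Multiset (Sym2 V)) : Prop :=
  S.Nonempty ∧ (∀ e ∈ T, e ∈ S.sym2) ∧ (∀ u ∈ S, ∀ v ∈ S, Conn T u v) ∧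
    T.card + 1 = S.card

/-- An `ℓTk` decomposition of `E`: `ℓ` edge-disjoint (not necessarily spanning,
possibly single-vertex) trees `(S i, T i)` whose edges partition `E`, such that every
vertex belongs to exactly `k` of the trees. -/
def LTkDecomp (k ℓ : ℕ) (E : Multiset (Sym2 V)) (S : Fin ℓ → Finset V)
    (T : Fin ℓ → Multiset (Sym2 V)) : Prop :=
  (∑ i, T i) = E ∧ (∀ i, IsTreeOn (S i) (T i)) ∧
    ∀ v : V, (Finset.univ.filter fun i => v ∈ S i).card = k

/-- A proper `ℓTk`: an `ℓTk` decomposition such that every nonempty subgraph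
(vertex set `U`, together with a sub-multiset `F i` of each tree spanned by `U`)
contains at least `ℓ` tree-pieces, the tree-pieces being the connected components of
the intersections of the trees with the subgraph. -/
def ProperLTk (k ℓ : ℕ) (E : Multiset (Sym2 V)) : Prop :=
  ∃ (S : Fin ℓ → Finset V) (T : Fin ℓ → Multiset (Sym2 V)),
    LTkDecomp k ℓ E S T ∧
      ∀ U : Finset V, U.Nonempty →
        ∀ F : Fin ℓ → Multiset (Sym2 V),
          (∀ i, F i ≤ T i) → (∀ i, ∀ e ∈ F i, e ∈ U.sym2) →
            ℓ ≤ ∑ i, treePieceCount (U ∩ S i) (F i)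

/-- One pebble-slide move (as a relation between configurations). -/
def SlideRel (k : ℕ) (A B : PGConfig V k) : Prop :=
  ∃ (v w : V) (c c' : Fin k), (v, w, c) ∈ A.edges ∧ c' ∈ A.pebs w ∧
    B = slideCfg A v w c c'

/-- A canonical move of the `(k,ℓ)`-pebble game with colors: add-edge moves cover the
new edge with a color present on both endpoints if one exists, and otherwise with the
highest-numbered color present; pebble-slide moves never create a monochromatic
cycle. -/
inductive CanStep (k ℓ : ℕ) : PGConfig V k → PGConfig V k → Prop
  | add (H : PGConfig V k) (v w : V) (c : Fin k)
      (hpeb : ℓ + 1 ≤ ∑ u ∈ ({v, w} : Finset V), (H.pebs u).card)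
      (hc : c ∈ H.pebs v)
      (hcanon : c ∈ H.pebs w ∨
        ((∀ c' : Fin k, c' ∈ H.pebs v → c' ∉ H.pebs w) ∧
          ∀ c' : Fin k, (c' ∈ H.pebs v ∨ c' ∈ H.pebs w) → c' ≤ c)) :
      CanStep k ℓ H (addEdgeCfg H v w c)
  | slide (H : PGConfig V k) (v w : V) (c c' : Fin k)
      (he : (v, w, c) ∈ H.edges)
      (hc : c' ∈ H.pebs w)
      (hnocycle : ∀ i : Fin k,
        HasCycle (monoEdges (slideCfg H v w c c') i) → HasCycle (monoEdges H i)) :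
      CanStep k ℓ H (slideCfg H v w c c')

/-- The graph obtained from a configuration by replacing every pebble lying on a
vertex by a loop at that vertex. -/
def withLoops [Fintype V] (H : PGConfig V k) : Multiset (Sym2 V) :=
  undirected H + Finset.univ.val.bind fun v => Multiset.replicate (H.pebs v).card s(v, v)

end PebbleGame
open PebbleGame

namespace PebbleGame

variable {V : Type} [DecidableEq V] {k ℓ : ℕ}

/-- Out-degree of a vertex in a configuration. -/
def outdeg (H : PGConfig V k) (u : V) : ℕ := (H.edges.filter fun e => e.1 = u).card

lemma outdeg_inv [Fintype V] (H : PGConfig V k) (hH : Reachable k ℓ H) :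
    ∀ u, (H.pebs u).card + outdeg H u = k := by
  induction hH with
  | refl =>
      intro u
      simp [initCfg, outdeg]
  | @tail b cfg hbc hstep ih =>
      intro u
      cases hstep with
      | add v w cc hpeb hc =>
          have hcards : 1 ≤ (b.pebs v).card :=
            Multiset.card_pos_iff_exists_mem.2 ⟨cc, hc⟩
          by_cases hu : u = v
          · subst hu
            have h1 : (addEdgeCfg b u w cc).pebs u = (b.pebs u).erase cc := by
              simp [addEdgeCfg]
            have h2 : outdeg (addEdgeCfg b u w cc) u = outdeg b u + 1 := by
              simp [addEdgeCfg, outdeg, Multiset.filter_cons]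
            have := ih u
            rw [h1, h2, Multiset.card_erase_of_mem hc]
            simp only [Nat.pred_eq_sub_one]
            omega
          · have h1 : (addEdgeCfg b v w cc).pebs u = b.pebs u := by
              simp [addEdgeCfg, Function.update_of_ne hu]
            have h2 : outdeg (addEdgeCfg b v w cc) u = outdeg b u := by
              simp [addEdgeCfg, outdeg, Multiset.filter_cons, Ne.symm hu]
            rw [h1, h2]; exact ih u
      | slide v w cc cc' he hc =>
          have hov : 1 ≤ outdeg b v :=
            Multiset.card_pos_iff_exists_mem.2
              ⟨(v, w, cc), Multiset.mem_filter.2 ⟨he, rfl⟩⟩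
          have hcw : 1 ≤ (b.pebs w).card :=
            Multiset.card_pos_iff_exists_mem.2 ⟨cc', hc⟩
          have hsplit : b.edges = (v, w, cc) ::ₘ b.edges.erase (v, w, cc) :=
            (Multiset.cons_erase he).symm
          have hod : ∀ u, outdeg (slideCfg b v w cc cc') u
              = (if w = u then 1 else 0) + (outdeg b u - (if v = u then 1 else 0)) := by
            intro u
            have h1 : outdeg b u = (if v = u then 1 else 0)
                + ((b.edges.erase (v, w, cc)).filter (fun e => e.1 = u)).card := by
              conv_lhs => rw [outdeg, hsplit]
              rw [Multiset.filter_cons]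
              by_cases hv : v = u <;> simp [hv] <;> omega
            have h2 : outdeg (slideCfg b v w cc cc') u = (if w = u then 1 else 0)
                + ((b.edges.erase (v, w, cc)).filter (fun e => e.1 = u)).card := by
              show (((w, v, cc') ::ₘ b.edges.erase (v, w, cc)).filter
                  (fun e => e.1 = u)).card = _
              rw [Multiset.filter_cons]
              by_cases hw : w = u <;> simp [hw] <;> omega
            rw [h1, h2]
            by_cases hv : v = u <;> by_cases hw : w = u <;> simp [hv, hw] <;> omega
          have hovu : 1 ≤ outdeg b v := hov
          by_cases huv : u = v
          · subst huv
            by_cases huw : u = w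
            · subst huw
              have h1 : (slideCfg b u u cc cc').pebs u = cc ::ₘ (b.pebs u).erase cc' := by
                simp [slideCfg, Function.update_apply]
              have := ih u
              have hce := Multiset.card_erase_add_one hc
              rw [h1, hod u, Multiset.card_cons]
              simp only [eq_self_iff_true, if_true]
              omega
            · have h1 : (slideCfg b u w cc cc').pebs u = cc ::ₘ b.pebs u := by
                simp [slideCfg, Function.update_apply, huw]
              have := ih u
              rw [h1, hod u, Multiset.card_cons]
              rw [if_neg (Ne.symm huw), if_pos rfl]
              omega
          · by_cases huw : u = w
            · subst huw
              have h1 : (slideCfg b v u cc cc').pebs u = (b.pebs u).erase cc' := by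
                simp [slideCfg, Function.update_apply, huv]
              have := ih u
              have hce := Multiset.card_erase_add_one hc
              rw [h1, hod u]
              rw [if_pos rfl, if_neg (Ne.symm huv)]
              omega
            · have h1 : (slideCfg b v w cc cc').pebs u = b.pebs u := by
                simp [slideCfg, Function.update_apply, huv, huw]
              have := ih u
              rw [h1, hod u]
              rw [if_neg (Ne.symm huw), if_neg (Ne.symm huv)]
              omega

lemma sum_filter_tail (R : Finset V) :
    ∀ s : Multiset (V × V × Fin k),
      (∑ u ∈ R, ((s.filter fun e => e.1 = u)).card)
        = (s.filter fun e => e.1 ∈ R).card := by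
  intro s
  induction s using Multiset.induction_on with
  | empty => simp
  | cons a s ih =>
      simp only [Multiset.filter_cons]
      have hc : ∀ x : V, Multiset.card ((if a.1 = x then {a} else 0)
            + Multiset.filter (fun e => e.1 = x) s)
          = (if a.1 = x then 1 else 0)
            + Multiset.card (Multiset.filter (fun e => e.1 = x) s) := by
        intro x; by_cases h : a.1 = x <;> simp [h] <;> omega
      simp only [hc]
      rw [Finset.sum_add_distrib, ih, Finset.sum_ite_eq R a.1 (fun _ => 1)]
      by_cases ha : a.1 ∈ R <;> simp [ha] <;> omega

lemma sum_card_update (S : Finset V) (f f' : V → Multiset (Fin k)) (x : V) (hx : x ∈ S)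
    (hagree : ∀ z ∈ S, z ≠ x → f' z = f z) (hx' : (f' x).card = (f x).card + 1) :
    ∑ z ∈ S, (f' z).card = (∑ z ∈ S, (f z).card) + 1 := by
  have h1 : ∑ z ∈ S.erase x, (f' z).card = ∑ z ∈ S.erase x, (f z).card :=
    Finset.sum_congr rfl fun z hz => by
      rw [hagree z (Finset.mem_of_mem_erase hz) (Finset.ne_of_mem_erase hz)]
  rw [← Finset.add_sum_erase _ (fun z => (f' z).card) hx,
    ← Finset.add_sum_erase _ (fun z => (f z).card) hx, h1, hx']
  omega

lemma chain_targets {r : V → V → Prop} :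
    ∀ {x : V} {l : List V}, List.Chain r x l → ∀ y ∈ l, ∃ z, r z y := by
  intro x l
  induction l generalizing x with
  | nil => intro _ y hy; simp at hy
  | cons a l ih =>
      intro h y hy
      obtain ⟨hxa, hl⟩ := List.isChain_cons_cons.1 h
      rcases List.mem_cons.1 hy with rfl | hy
      · exact ⟨x, hxa⟩
      · exact ih hl y hy

lemma chain_imp_mem {r s : V → V → Prop} :
    ∀ {x : V} {l : List V}, List.Chain r x l →
      (∀ a b, b ∈ l → r a b → s a b) → List.Chain s x l := by
  intro x l
  induction l generalizing x with
  | nil => intro _ _; exact List.Chain.nil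
  | cons a l ih =>
      intro h himp
      obtain ⟨hxa, hl⟩ := List.isChain_cons_cons.1 h
      exact List.Chain.cons (himp _ _ List.mem_cons_self hxa)
        (ih hl fun a' b hb => himp a' b (List.mem_cons_of_mem _ hb))

lemma slide_one (v w : V) (H : PGConfig V k) (x u : V) (c : Fin k)
    (he : (x, u, c) ∈ H.edges) (hx : x ∈ ({v, w} : Finset V))
    (hu : u ∉ ({v, w} : Finset V)) (hp : H.pebs u ≠ 0) :
    ∃ H', Relation.ReflTransGen (SlideRel k) H H' ∧
      (∀ z ∈ ({v, w} : Finset V), H.pebs z ≤ H'.pebs z) ∧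
      ∑ z ∈ ({v, w} : Finset V), (H'.pebs z).card =
        (∑ z ∈ ({v, w} : Finset V), (H.pebs z).card) + 1 := by
  obtain ⟨c', hc'⟩ := Multiset.exists_mem_of_ne_zero hp
  have hxu : x ≠ u := fun h => hu (h ▸ hx)
  have hpx : (slideCfg H x u c c').pebs x = c ::ₘ H.pebs x := by
    simp [slideCfg, Function.update_apply, hxu]
  have hpz : ∀ z, z ≠ x → z ≠ u → (slideCfg H x u c c').pebs z = H.pebs z := by
    intro z hzx hzu
    simp [slideCfg, Function.update_apply, hzx, hzu]
  refine ⟨slideCfg H x u c c',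
    Relation.ReflTransGen.single ⟨x, u, c, c', he, hc', rfl⟩, ?_, ?_⟩
  · intro z hz
    by_cases hzx : z = x
    · subst hzx; rw [hpx]; exact Multiset.le_cons_self _ _
    · rw [hpz z hzx (fun h => hu (h ▸ hz))]
  · refine sum_card_update _ _ _ x hx ?_ ?_
    · intro z hz hzx; exact hpz z hzx (fun h => hu (h ▸ hz))
    · rw [hpx, Multiset.card_cons]

lemma slide_aux (v w : V) :
    ∀ n : ℕ, ∀ H : PGConfig V k, ∀ x u : V, ∀ p : List V, p.length ≤ n →
      List.Chain (fun a b => ∃ c : Fin k, (a, b, c) ∈ H.edges) x (p ++ [u]) →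
      (∀ y ∈ p, y ∉ ({v, w} : Finset V)) →
      x ∈ ({v, w} : Finset V) → u ∉ ({v, w} : Finset V) →
      H.pebs u ≠ 0 →
      ∃ H', Relation.ReflTransGen (SlideRel k) H H' ∧
        (∀ z ∈ ({v, w} : Finset V), H.pebs z ≤ H'.pebs z) ∧
        ∑ z ∈ ({v, w} : Finset V), (H'.pebs z).card =
          (∑ z ∈ ({v, w} : Finset V), (H.pebs z).card) + 1 := by
  intro n
  induction n with
  | zero =>
      intro H x u p hlen hchain hp hx hu hpu
      have hp0 : p = [] := List.eq_nil_of_length_eq_zero (Nat.le_zero.1 hlen)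
      subst hp0
      obtain ⟨c, hc⟩ := List.isChain_pair.1 hchain
      exact slide_one v w H x u c hc hx hu hpu
  | succ n ih =>
      intro H x u p hlen hchain hp hx hu hpu
      rcases List.eq_nil_or_concat p with rfl | ⟨p', y, rfl⟩
      · obtain ⟨c, hc⟩ := List.isChain_pair.1 hchain
        exact slide_one v w H x u c hc hx hu hpu
      · simp only [List.concat_eq_append] at hchain hp hlen
        have hchain' : List.Chain (fun a b => ∃ c : Fin k, (a, b, c) ∈ H.edges) x
            (p' ++ y :: [u]) := by
          simpa [List.append_assoc] using hchain
        obtain ⟨hchain1, hchain2⟩ := List.isChain_cons_split.1 hchain'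
        have hy : y ∉ ({v, w} : Finset V) := hp y (by simp)
        have hp' : ∀ z ∈ p', z ∉ ({v, w} : Finset V) := fun z hz =>
          hp z (List.mem_append_left _ hz)
        by_cases humem : u ∈ p' ++ [y]
        · obtain ⟨s, t, hst⟩ := List.append_of_mem humem
          rw [hst] at hchain1
          obtain ⟨hchain3, _⟩ := List.isChain_cons_split.1 hchain1
          have hslen : s.length ≤ n := by
            have := congrArg List.length hst
            simp at this hlen
            omega
          refine ih H x u s hslen hchain3 ?_ hx hu hpu
          intro z hz
          refine hp z ?_
          rw [hst]
          exact List.mem_append.2 (Or.inl hz)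
        · -- u ∉ p' ++ [y]; slide along the last edge (y, u)
          obtain ⟨c, hc⟩ := List.isChain_pair.1 hchain2
          obtain ⟨c', hc'⟩ := Multiset.exists_mem_of_ne_zero hpu
          have hyu : y ≠ u := fun h => humem (by simp [h])
          set H₁ := slideCfg H y u c c' with hH₁
          have hstep : SlideRel k H H₁ := ⟨y, u, c, c', hc, hc', rfl⟩
          have hpy : H₁.pebs y = c ::ₘ H.pebs y := by
            simp [hH₁, slideCfg, Function.update_apply, hyu]
          have hpzz : ∀ z, z ≠ y → z ≠ u → H₁.pebs z = H.pebs z := by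
            intro z hzy hzu
            simp [hH₁, slideCfg, Function.update_apply, hzy, hzu]
          have hchainH₁ : List.Chain (fun a b => ∃ cc : Fin k, (a, b, cc) ∈ H₁.edges) x
              (p' ++ [y]) := by
            refine chain_imp_mem hchain1 ?_
            rintro a b hb ⟨cc, hcc⟩
            refine ⟨cc, ?_⟩
            have hbu : b ≠ u := fun h => humem (h ▸ hb)
            have hne : (a, b, cc) ≠ (y, u, c) := by
              intro h; apply hbu; exact congrArg (fun q => q.2.1) h
            exact Multiset.mem_cons_of_mem ((Multiset.mem_erase_of_ne hne).2 hcc)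
          have hplen : p'.length ≤ n := by
            simp at hlen; omega
          obtain ⟨H', htrans, hle, hsum⟩ :=
            ih H₁ x y p' hplen hchainH₁ hp' hx hy (by rw [hpy]; exact Multiset.cons_ne_zero)
          have hfix : ∀ z ∈ ({v, w} : Finset V), H₁.pebs z = H.pebs z := fun z hz =>
            hpzz z (fun h => hy (h ▸ hz)) (fun h => hu (h ▸ hz))
          refine ⟨H', Relation.ReflTransGen.head hstep htrans, ?_, ?_⟩
          · intro z hz
            rw [← hfix z hz]
            exact hle z hz
          · rw [hsum]
            congr 1
            exact Finset.sum_congr rfl fun z hz => by rw [hfix z hz]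

end PebbleGame


/-- the `ℓ+1` pebble condition: if adding an edge `vw` to the
underlying graph of a reachable configuration keeps it `(k,ℓ)`-sparse, and `{v,w}`
holds fewer than `ℓ+1` pebbles, then by pebble-slide moves a further pebble can be
brought to `{v,w}` without removing any pebble already there. -/
theorem ell_plus_one_pebble_condition {V : Type} [Fintype V] [DecidableEq V]
    (k ℓ : ℕ) (hk : 1 ≤ k) (hℓ : ℓ ≤ 2 * k - 1) (H : PGConfig V k)
    (hH : Reachable k ℓ H) (v w : V)
    (hsparse : Sparse k ℓ (s(v, w) ::ₘ undirected H))
    (hfew : ∑ u ∈ ({v, w} : Finset V), (H.pebs u).card < ℓ + 1) :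
    ∃ H' : PGConfig V k,
      Relation.ReflTransGen (SlideRel k) H H' ∧
      (∀ u ∈ ({v, w} : Finset V), H.pebs u ≤ H'.pebs u) ∧
      ∑ u ∈ ({v, w} : Finset V), (H'.pebs u).card =
        (∑ u ∈ ({v, w} : Finset V), (H.pebs u).card) + 1 := by
  classical
  have hinv : ∀ u, (H.pebs u).card + outdeg H u = k := outdeg_inv H hH
  set r : V → V → Prop := fun a b =>
    (∃ c : Fin k, (a, b, c) ∈ H.edges) ∧ b ∉ ({v, w} : Finset V) with hr
  set R : Finset V := Finset.univ.filter fun u =>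
    Relation.ReflTransGen r v u ∨ Relation.ReflTransGen r w u with hR
  have hmemR : ∀ u, u ∈ R ↔
      (Relation.ReflTransGen r v u ∨ Relation.ReflTransGen r w u) := by
    intro u; simp [hR]
  have hvR : v ∈ R := (hmemR v).2 (Or.inl Relation.ReflTransGen.refl)
  have hwR : w ∈ R := (hmemR w).2 (Or.inr Relation.ReflTransGen.refl)
  have hclosed : ∀ e ∈ H.edges, e.1 ∈ R → e.2.1 ∈ R := by
    intro e he h1
    by_cases hb : e.2.1 ∈ ({v, w} : Finset V)
    · rcases Finset.mem_insert.1 hb with h | h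
      · rw [h]; exact hvR
      · rw [Finset.mem_singleton.1 h]; exact hwR
    · have hrel : r e.1 e.2.1 := ⟨⟨e.2.2, by simpa using he⟩, hb⟩
      rcases (hmemR e.1).1 h1 with h | h
      · exact (hmemR _).2 (Or.inl (h.tail hrel))
      · exact (hmemR _).2 (Or.inr (h.tail hrel))
  have hsum1 : ∑ u ∈ R, ((H.pebs u).card + outdeg H u) = k * R.card := by
    rw [Finset.sum_congr rfl fun u _ => hinv u, Finset.sum_const, smul_eq_mul,
      mul_comm]
  have hsum2 : ∑ u ∈ R, outdeg H u = (H.edges.filter fun e => e.1 ∈ R).card :=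
    sum_filter_tail R H.edges
  have hfil : (H.edges.filter fun e => e.1 ∈ R) =
      (H.edges.filter fun e => e.1 ∈ R).filter
        (fun e => s(e.1, e.2.1) ∈ R.sym2) := by
    symm; rw [Multiset.filter_eq_self]
    intro e he
    have he' := Multiset.mem_filter.1 he
    exact Finset.mk_mem_sym2_iff.2 ⟨he'.2, hclosed e he'.1 he'.2⟩
  have hspan : (spanned (undirected H) R).card
      = ((H.edges.filter fun e => s(e.1, e.2.1) ∈ R.sym2)).card := by
    rw [spanned, undirected, ← Multiset.countP_eq_card_filter, Multiset.countP_map]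
  have h3 : (H.edges.filter fun e => e.1 ∈ R).card
      ≤ (spanned (undirected H) R).card := by
    rw [hspan]
    apply Multiset.card_le_card
    rw [hfil]
    exact Multiset.filter_le_filter _ (Multiset.filter_le _ _)
  have hvwsub : ({v, w} : Finset V) ⊆ R := by
    intro z hz
    rcases Finset.mem_insert.1 hz with rfl | hz
    · exact hvR
    · rw [Finset.mem_singleton.1 hz]; exact hwR
  have hsp := hsparse R ⟨v, hvR⟩
  have hspan_cons : spanned (s(v, w) ::ₘ undirected H) R
      = s(v, w) ::ₘ spanned (undirected H) R := by
    rw [spanned, Multiset.filter_cons_of_pos, spanned]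
    exact Finset.mk_mem_sym2_iff.2 ⟨hvR, hwR⟩
  rw [hspan_cons, Multiset.card_cons] at hsp
  have hPE : (∑ u ∈ R, (H.pebs u).card)
      + (H.edges.filter fun e => e.1 ∈ R).card = k * R.card := by
    rw [← hsum2, ← Finset.sum_add_distrib]; exact hsum1
  have hKey : ℓ + 1 ≤ ∑ u ∈ R, (H.pebs u).card := by
    have h1 : 1 ≤ k * R.card - ℓ := le_trans (Nat.le_add_left 1 _) hsp
    have hlK : ℓ < k * R.card := Nat.lt_of_sub_pos (lt_of_lt_of_le Nat.zero_lt_one h1)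
    have hsp' := Nat.add_le_of_le_sub hlK.le hsp
    omega
  have hsplit : (∑ u ∈ R \ {v, w}, (H.pebs u).card)
      + ∑ u ∈ ({v, w} : Finset V), (H.pebs u).card
      = ∑ u ∈ R, (H.pebs u).card := Finset.sum_sdiff hvwsub
  have hex : ∃ u0 ∈ R, u0 ∉ ({v, w} : Finset V) ∧ H.pebs u0 ≠ 0 := by
    by_contra hcon
    push_neg at hcon
    have hz : ∑ u ∈ R \ {v, w}, (H.pebs u).card = 0 := by
      apply Finset.sum_eq_zero
      intro u hu
      have hu1 := Finset.mem_sdiff.1 hu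
      rw [hcon u hu1.1 hu1.2]
      simp
    omega
  obtain ⟨u0, hu0R, hu0vw, hu0p⟩ := hex
  obtain ⟨x, hxmem, hreach⟩ : ∃ x, x ∈ ({v, w} : Finset V)
      ∧ Relation.ReflTransGen r x u0 := by
    rcases (hmemR u0).1 hu0R with h | h
    · exact ⟨v, by simp, h⟩
    · exact ⟨w, by simp, h⟩
  obtain ⟨l, hchain, hlast⟩ := List.exists_isChain_cons_of_relationReflTransGen hreach
  have hlne : l ≠ [] := by
    intro h; subst h
    simp only [List.getLast_singleton] at hlast
    exact hu0vw (hlast ▸ hxmem)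
  have hlu : l.getLast hlne = u0 := by
    rw [← hlast, List.getLast_cons hlne]
  have hlsplit : l.dropLast ++ [u0] = l := by
    rw [← hlu]; exact List.dropLast_append_getLast hlne
  have hchain2 : List.Chain (fun a b => ∃ c : Fin k, (a, b, c) ∈ H.edges) x
      (l.dropLast ++ [u0]) := by
    rw [hlsplit]
    exact chain_imp_mem hchain (fun a b _ hab => hab.1)
  have hdrop : ∀ y ∈ l.dropLast, y ∉ ({v, w} : Finset V) := by
    intro y hy
    obtain ⟨z, hz⟩ := chain_targets hchain y ((List.dropLast_sublist l).subset hy)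
    exact hz.2
  exact slide_aux v w l.dropLast.length H x u0 l.dropLast le_rfl hchain2 hdrop
    hxmem hu0vw hu0p
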